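/- Gaussian i.i.d. case: for the model y_i = f(x_i; θ) + ε_i with ε_i ~ N(0, MSE(θ)) independent for i = 1,…,n, the log-likelihood satisfies log p(D|θ) = −(n/2)·log MSE(θ) + const(D), and consequently, taking θ_D to be the MLE, the intrinsic reward r = E_{p(θ)}[log MSE(θ)] − log MSE(θ_D) satisfies r ≥ (2/n)·KL(p(θ|D) ‖ p(θ)). -/

import Mathlib

open MeasureTheory Real Finset

/-- Gaussian i.i.d. case: for `y_i = f(x_i;θ) + ε_i`, `ε_i ~ N(0, MSE(θ))` with the
plugged-in variance `MSE(θ) = (1/n)Σ(y_i − f(x_i;θ))²`, the log-likelihood equals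
`−(n/2)·log MSE(θ) + const(D)`, and consequently, with `θ_D` the MLE, the intrinsic
reward `r = E_{prior}[log MSE] − log MSE(θ_D)` satisfies `r ≥ (2/n)·KL(post‖prior)`. -/
theorem gaussian_iid_reward_bound {Θ X : Type*} [MeasurableSpace Θ] (μ : Measure Θ)
    (n : ℕ) (hn : 0 < n) (x : Fin n → X) (y : Fin n → ℝ) (f : Θ → X → ℝ)
    (MSE like prior post : Θ → ℝ) (pD : ℝ) (θD : Θ)
    (hMSE : ∀ θ, MSE θ = (1 / (n : ℝ)) * ∑ i, (y i - f θ (x i)) ^ 2)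
    (hMSE_pos : ∀ θ, 0 < MSE θ)
    (hlike : ∀ θ, like θ =
      ∏ i, (Real.sqrt (2 * Real.pi * MSE θ))⁻¹ *
        Real.exp (-(y i - f θ (x i)) ^ 2 / (2 * MSE θ)))
    (hprior_nonneg : ∀ θ, 0 ≤ prior θ)
    (hprior_prob : ∫ θ, prior θ ∂μ = 1)
    (hpD : pD = ∫ θ, like θ * prior θ ∂μ)
    (hpD_pos : 0 < pD)
    (hpost : ∀ θ, post θ = like θ * prior θ / pD)
    (hθD : ∀ θ, like θ ≤ like θD)
    (hint1 : Integrable (fun θ => like θ * prior θ) μ)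
    (hint2 : Integrable (fun θ => prior θ * Real.log (MSE θ)) μ)
    (hint3 : Integrable (fun θ => post θ * Real.log (post θ / prior θ)) μ) :
    (∀ θ, Real.log (like θ) =
        -((n : ℝ) / 2) * Real.log (MSE θ)
          + (-((n : ℝ) / 2) - ((n : ℝ) / 2) * Real.log (2 * Real.pi))) ∧
    (2 / (n : ℝ)) * (∫ θ, post θ * Real.log (post θ / prior θ) ∂μ)
      ≤ (∫ θ, prior θ * Real.log (MSE θ) ∂μ) - Real.log (MSE θD) := by
  have hπ : (0:ℝ) < 2 * Real.pi := by positivity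
  have hn' : (0:ℝ) < (n:ℝ) := Nat.cast_pos.mpr hn
  have hlike_pos : ∀ θ, 0 < like θ := by
    intro θ
    rw [hlike]
    apply Finset.prod_pos
    intro i _
    have h1 : 0 < Real.sqrt (2 * Real.pi * MSE θ) :=
      Real.sqrt_pos.2 (mul_pos hπ (hMSE_pos θ))
    exact mul_pos (inv_pos.2 h1) (Real.exp_pos _)
  have hsum : ∀ θ, ∑ i, (y i - f θ (x i)) ^ 2 = (n:ℝ) * MSE θ := by
    intro θ
    rw [hMSE]
    field_simp
  have claim1 : ∀ θ, Real.log (like θ) =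
      -((n : ℝ) / 2) * Real.log (MSE θ)
        + (-((n : ℝ) / 2) - ((n : ℝ) / 2) * Real.log (2 * Real.pi)) := by
    intro θ
    have hM := hMSE_pos θ
    have hc : (0:ℝ) < 2 * Real.pi * MSE θ := mul_pos hπ hM
    have hs : 0 < Real.sqrt (2 * Real.pi * MSE θ) := Real.sqrt_pos.2 hc
    rw [hlike, Real.log_prod (fun i _ => by positivity)]
    have heach : ∀ i ∈ Finset.univ (α := Fin n),
        Real.log ((Real.sqrt (2 * Real.pi * MSE θ))⁻¹ *
          Real.exp (-(y i - f θ (x i)) ^ 2 / (2 * MSE θ)))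
        = -(1/2) * Real.log (2 * Real.pi * MSE θ) +
          -(y i - f θ (x i)) ^ 2 / (2 * MSE θ) := by
      intro i _
      rw [Real.log_mul (by positivity) (Real.exp_ne_zero _), Real.log_inv,
        Real.log_sqrt hc.le, Real.log_exp]
      ring
    rw [Finset.sum_congr rfl heach, Finset.sum_add_distrib, Finset.sum_const,
      Finset.card_univ, Fintype.card_fin]
    have h2 : ∑ i, -(y i - f θ (x i)) ^ 2 / (2 * MSE θ) = -((n:ℝ)/2) := by
      have : ∑ i, -(y i - f θ (x i)) ^ 2 / (2 * MSE θ)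
          = (∑ i, -(y i - f θ (x i)) ^ 2) / (2 * MSE θ) := (Finset.sum_div _ _ _).symm
      rw [this, Finset.sum_neg_distrib, hsum]
      field_simp
    rw [h2, Real.log_mul hπ.ne' hM.ne']
    ring
  refine ⟨claim1, ?_⟩
  -- abbreviations
  set C : ℝ := -((n : ℝ) / 2) - ((n : ℝ) / 2) * Real.log (2 * Real.pi) with hC
  set I : ℝ := ∫ θ, prior θ * Real.log (MSE θ) ∂μ with hI
  have hprior_int : Integrable prior μ := by
    by_contra h
    rw [integral_undef h] at hprior_prob
    norm_num at hprior_prob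
  -- pointwise identity for the KL integrand
  have hkey : ∀ θ, post θ * Real.log (post θ / prior θ)
      = (like θ * prior θ / pD) * (Real.log (like θ) - Real.log pD) := by
    intro θ
    by_cases hp : prior θ = 0
    · rw [hpost, hp]
      simp
    · have hp' : 0 < prior θ := lt_of_le_of_ne (hprior_nonneg θ) (Ne.symm hp)
      have h1 : post θ / prior θ = like θ / pD := by
        rw [hpost]
        field_simp
      rw [h1, Real.log_div (hlike_pos θ).ne' hpD_pos.ne', hpost]
  -- prior * log like is integrable
  have hplog : Integrable (fun θ => prior θ * Real.log (like θ)) μ := by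
    have : (fun θ => prior θ * Real.log (like θ))
        = fun θ => -((n:ℝ)/2) * (prior θ * Real.log (MSE θ)) + C * prior θ := by
      funext θ
      rw [claim1 θ]
      ring
    rw [this]
    exact (hint2.const_mul _).add (hprior_int.const_mul _)
  have hplog_int : ∫ θ, prior θ * Real.log (like θ) ∂μ = -((n:ℝ)/2) * I + C := by
    have : (fun θ => prior θ * Real.log (like θ))
        = fun θ => -((n:ℝ)/2) * (prior θ * Real.log (MSE θ)) + C * prior θ := by
      funext θ
      rw [claim1 θ]
      ring
    rw [this, integral_add (hint2.const_mul _) (hprior_int.const_mul _),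
      integral_const_mul, integral_const_mul, hprior_prob]
    ring
  -- Jensen-type bound: ∫ prior log like ≤ log pD
  have hjensen : ∫ θ, prior θ * Real.log (like θ) ∂μ ≤ Real.log pD := by
    have hpw : ∀ θ, prior θ * (Real.log (like θ) - Real.log pD)
        ≤ like θ * prior θ / pD - prior θ := by
      intro θ
      have hlr : Real.log (like θ) - Real.log pD ≤ like θ / pD - 1 := by
        have := Real.log_le_sub_one_of_pos (div_pos (hlike_pos θ) hpD_pos)
        rwa [Real.log_div (hlike_pos θ).ne' hpD_pos.ne'] at this
      have := mul_le_mul_of_nonneg_left hlr (hprior_nonneg θ)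
      calc prior θ * (Real.log (like θ) - Real.log pD)
          ≤ prior θ * (like θ / pD - 1) := this
        _ = like θ * prior θ / pD - prior θ := by ring
    have hintL : Integrable (fun θ => prior θ * (Real.log (like θ) - Real.log pD)) μ := by
      have : (fun θ => prior θ * (Real.log (like θ) - Real.log pD))
          = fun θ => prior θ * Real.log (like θ) - Real.log pD * prior θ := by
        funext θ; ring
      rw [this]
      exact hplog.sub (hprior_int.const_mul _)
    have hintR : Integrable (fun θ => like θ * prior θ / pD - prior θ) μ :=
      (hint1.div_const _).sub hprior_int
    have hmono := integral_mono hintL hintR hpw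
    have hL : ∫ θ, prior θ * (Real.log (like θ) - Real.log pD) ∂μ
        = (∫ θ, prior θ * Real.log (like θ) ∂μ) - Real.log pD := by
      have : (fun θ => prior θ * (Real.log (like θ) - Real.log pD))
          = fun θ => prior θ * Real.log (like θ) - Real.log pD * prior θ := by
        funext θ; ring
      rw [this, integral_sub hplog (hprior_int.const_mul _), integral_const_mul, hprior_prob]
      ring
    have hR : ∫ θ, (like θ * prior θ / pD - prior θ) ∂μ = 0 := by
      rw [integral_sub (hint1.div_const _) hprior_int, integral_div, ← hpD, hprior_prob]
      field_simp
      norm_num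
    rw [hL, hR] at hmono
    linarith
  -- KL ≤ log like θD − log pD
  have hKL : ∫ θ, post θ * Real.log (post θ / prior θ) ∂μ
      ≤ Real.log (like θD) - Real.log pD := by
    have hpw : ∀ θ, post θ * Real.log (post θ / prior θ)
        ≤ (like θ * prior θ / pD) * (Real.log (like θD) - Real.log pD) := by
      intro θ
      rw [hkey θ]
      have h1 : 0 ≤ like θ * prior θ / pD := by
        have := mul_nonneg (hlike_pos θ).le (hprior_nonneg θ)
        positivity
      have h2 : Real.log (like θ) ≤ Real.log (like θD) :=
        Real.log_le_log (hlike_pos θ) (hθD θ)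
      have h3 : Real.log (like θ) - Real.log pD ≤ Real.log (like θD) - Real.log pD := by
        linarith
      exact mul_le_mul_of_nonneg_left h3 h1
    have hintR : Integrable (fun θ => (like θ * prior θ / pD) * (Real.log (like θD) - Real.log pD)) μ :=
      (hint1.div_const _).mul_const _
    have hmono := integral_mono hint3 hintR hpw
    have hR : ∫ θ, (like θ * prior θ / pD) * (Real.log (like θD) - Real.log pD) ∂μ
        = Real.log (like θD) - Real.log pD := by
      rw [integral_mul_const, integral_div, ← hpD]
      field_simp
    rw [hR] at hmono
    exact hmono
  -- combine
  have hfinal : ∫ θ, post θ * Real.log (post θ / prior θ) ∂μ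
      ≤ ((n:ℝ)/2) * (I - Real.log (MSE θD)) := by
    have h1 : Real.log (like θD) = -((n:ℝ)/2) * Real.log (MSE θD) + C := claim1 θD
    have h2 : -((n:ℝ)/2) * I + C ≤ Real.log pD := by rw [← hplog_int]; exact hjensen
    calc ∫ θ, post θ * Real.log (post θ / prior θ) ∂μ
        ≤ Real.log (like θD) - Real.log pD := hKL
      _ ≤ (-((n:ℝ)/2) * Real.log (MSE θD) + C) - (-((n:ℝ)/2) * I + C) := by
          rw [h1]; linarith
      _ = ((n:ℝ)/2) * (I - Real.log (MSE θD)) := by ring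
  have h2n : (0:ℝ) < 2 / (n:ℝ) := by positivity
  have := mul_le_mul_of_nonneg_left hfinal h2n.le
  calc (2 / (n:ℝ)) * (∫ θ, post θ * Real.log (post θ / prior θ) ∂μ)
      ≤ (2 / (n:ℝ)) * (((n:ℝ)/2) * (I - Real.log (MSE θD))) := this
    _ = I - Real.log (MSE θD) := by
        field_simp
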